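/- For any graph G: G is ωψ-perfect if and only if G is (C₄, P₄, P₃∪K₂, 3K₂)-free. -/
import Mathlib


open SimpleGraph

/-- A coloring of the vertices with colors `0, ..., k-1` which uses all `k` colors and such
that every pair of distinct colors appears on the endpoints of some edge. -/
def IsCompleteColoring {V : Type*} (G : SimpleGraph V) (c : V → ℕ) (k : ℕ) : Prop :=
  (∀ v, c v < k) ∧ (∀ i, i < k → ∃ v, c v = i) ∧
    ∀ i j, i < k → j < k → i ≠ j → ∃ u w, G.Adj u w ∧ c u = i ∧ c w = j

/-- A proper coloring: adjacent vertices get distinct colors. -/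
def IsProperColoring {V : Type*} (G : SimpleGraph V) (c : V → ℕ) : Prop :=
  ∀ u w, G.Adj u w → c u ≠ c w

/-- A Grundy coloring with `k` colors: proper, uses all `k` colors, and every vertex of
color `j` has, for each `i < j`, a neighbor colored `i`. -/
def IsGrundyColoring {V : Type*} (G : SimpleGraph V) (c : V → ℕ) (k : ℕ) : Prop :=
  (∀ v, c v < k) ∧ (∀ i, i < k → ∃ v, c v = i) ∧ IsProperColoring G c ∧
    ∀ v i, i < c v → ∃ u, G.Adj u v ∧ c u = i

/-- The pseudoachromatic number `ψ`. -/
noncomputable def pseudoachromaticNumber {V : Type*} (G : SimpleGraph V) : ℕ :=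
  sSup {k | ∃ c, IsCompleteColoring G c k}

/-- The achromatic number `α`. -/
noncomputable def achromaticNumber {V : Type*} (G : SimpleGraph V) : ℕ :=
  sSup {k | ∃ c, IsCompleteColoring G c k ∧ IsProperColoring G c}

/-- The Grundy number `Γ`. -/
noncomputable def grundyNumber {V : Type*} (G : SimpleGraph V) : ℕ :=
  sSup {k | ∃ c, IsGrundyColoring G c k}

/-- The chromatic number `χ` (as a natural number). -/
noncomputable def chromNumber {V : Type*} (G : SimpleGraph V) : ℕ :=
  sInf {k | ∃ c : V → ℕ, (∀ v, c v < k) ∧ IsProperColoring G c}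

/-- The clique number `ω`. -/
noncomputable def cliqueNumber {V : Type*} (G : SimpleGraph V) : ℕ :=
  sSup {n | ∃ s : Finset V, G.IsNClique n s}

/-- `G` is `H`-free: no induced subgraph of `G` is isomorphic to `H`. -/
def GraphFree {V W : Type*} (G : SimpleGraph V) (H : SimpleGraph W) : Prop :=
  ∀ s : Set V, IsEmpty ((G.induce s) ≃g H)

/-- `G` is `ωψ`-perfect. -/
def OmegaPsiPerfect {V : Type*} (G : SimpleGraph V) : Prop :=
  ∀ s : Set V, cliqueNumber (G.induce s) = pseudoachromaticNumber (G.induce s)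

/-- `G` is `χψ`-perfect. -/
def ChiPsiPerfect {V : Type*} (G : SimpleGraph V) : Prop :=
  ∀ s : Set V, chromNumber (G.induce s) = pseudoachromaticNumber (G.induce s)

/-- The path on 4 vertices. -/
def pathP4 : SimpleGraph (Fin 4) :=
  SimpleGraph.fromRel (fun a b => (b : ℕ) = (a : ℕ) + 1)

/-- The cycle on 4 vertices. -/
def cycleC4 : SimpleGraph (Fin 4) :=
  SimpleGraph.fromRel (fun a b => b = a + 1)

/-- The disjoint union of a path on 3 vertices and an edge. -/
def graphP3K2 : SimpleGraph (Fin 5) :=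
  SimpleGraph.fromRel (fun a b => (a, b) ∈ [((0 : Fin 5), (1 : Fin 5)), (1, 2), (3, 4)])

/-- The disjoint union of three edges. -/
def graph3K2 : SimpleGraph (Fin 6) :=
  SimpleGraph.fromRel (fun a b => (a, b) ∈ [((0 : Fin 6), (1 : Fin 6)), (2, 3), (4, 5)])

/-- The join of two graphs. -/
def graphJoin {V W : Type*} (G : SimpleGraph V) (H : SimpleGraph W) : SimpleGraph (V ⊕ W) :=
  SimpleGraph.fromRel (fun x y =>
    match x, y with
    | Sum.inl a, Sum.inl b => G.Adj a b
    | Sum.inr a, Sum.inr b => H.Adj a b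
    | _, _ => True)

/-- The disjoint union of two graphs. -/
def graphSum {V W : Type*} (G : SimpleGraph V) (H : SimpleGraph W) : SimpleGraph (V ⊕ W) :=
  SimpleGraph.fromRel (fun x y =>
    match x, y with
    | Sum.inl a, Sum.inl b => G.Adj a b
    | Sum.inr a, Sum.inr b => H.Adj a b
    | _, _ => False)

/-- The disjoint union of a family of graphs. -/
def graphSigma {ι : Type} {U : ι → Type} (f : ∀ i, SimpleGraph (U i)) :
    SimpleGraph (Σ i, U i) :=
  SimpleGraph.fromRel (fun x y => ∃ h : x.1 = y.1, (f y.1).Adj (h ▸ x.2) y.2)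


/-! ### Auxiliary definitions -/

section AuxDefs
variable {V : Type*}

def NoC4 (G : SimpleGraph V) : Prop :=
  ∀ a b c d : V, a ≠ c → b ≠ d → G.Adj a b → G.Adj b c → G.Adj c d → G.Adj d a →
    ¬ G.Adj a c → ¬ G.Adj b d → False

def NoP4 (G : SimpleGraph V) : Prop :=
  ∀ a b c d : V, a ≠ d → G.Adj a b → G.Adj b c → G.Adj c d →
    ¬ G.Adj a c → ¬ G.Adj b d → ¬ G.Adj a d → False

def NoP3K2 (G : SimpleGraph V) : Prop :=
  ∀ a b c d e : V, a ≠ c → G.Adj a b → G.Adj b c → ¬ G.Adj a c → G.Adj d e →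
    ¬ G.Adj a d → ¬ G.Adj a e → ¬ G.Adj b d → ¬ G.Adj b e → ¬ G.Adj c d → ¬ G.Adj c e → False

def No3K2 (G : SimpleGraph V) : Prop :=
  ∀ a b c d e f : V, G.Adj a b → G.Adj c d → G.Adj e f →
    ¬ G.Adj a c → ¬ G.Adj a d → ¬ G.Adj b c → ¬ G.Adj b d →
    ¬ G.Adj a e → ¬ G.Adj a f → ¬ G.Adj b e → ¬ G.Adj b f →
    ¬ G.Adj c e → ¬ G.Adj c f → ¬ G.Adj d e → ¬ G.Adj d f → False

def RelCC (G : SimpleGraph V) (s : Finset V) (c : V → ℕ) (k : ℕ) : Prop :=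
  (∀ v ∈ s, c v < k) ∧ (∀ i, i < k → ∃ v ∈ s, c v = i) ∧
    ∀ i j, i < k → j < k → i ≠ j → ∃ x ∈ s, ∃ y ∈ s, G.Adj x y ∧ c x = i ∧ c y = j

end AuxDefs

lemma NoC4.induce {V : Type*} {G : SimpleGraph V} (h : NoC4 G) (s : Set V) :
    NoC4 (G.induce s) := by
  intro a b c d hac hbd hab hbc hcd hda hnac hnbd
  exact h a b c d (fun h' => hac (Subtype.ext h')) (fun h' => hbd (Subtype.ext h'))
    hab hbc hcd hda hnac hnbd

lemma NoP4.induce {V : Type*} {G : SimpleGraph V} (h : NoP4 G) (s : Set V) :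
    NoP4 (G.induce s) := by
  intro a b c d had hab hbc hcd hnac hnbd hnad
  exact h a b c d (fun h' => had (Subtype.ext h')) hab hbc hcd hnac hnbd hnad

lemma NoP3K2.induce {V : Type*} {G : SimpleGraph V} (h : NoP3K2 G) (s : Set V) :
    NoP3K2 (G.induce s) := by
  intro a b c d e hac hab hbc hnac hde h1 h2 h3 h4 h5 h6
  exact h a b c d e (fun h' => hac (Subtype.ext h')) hab hbc hnac hde h1 h2 h3 h4 h5 h6

lemma No3K2.induce {V : Type*} {G : SimpleGraph V} (h : No3K2 G) (s : Set V) :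
    No3K2 (G.induce s) := by
  intro a b c d e f hab hcd hef h1 h2 h3 h4 h5 h6 h7 h8 h9 h10 h11 h12
  exact h a b c d e f hab hcd hef h1 h2 h3 h4 h5 h6 h7 h8 h9 h10 h11 h12


lemma core_aux (G : SimpleGraph V) (h4 : NoC4 G) (hp : NoP4 G) (hpk : NoP3K2 G)
    (h3 : No3K2 G) :
    ∀ n (s : Finset V), s.card ≤ n → ∀ k (c : V → ℕ), RelCC G s c k →
      ∃ t : Finset V, t ⊆ s ∧ G.IsNClique k t := by
  classical
  intro n
  induction n with
  | zero =>
    intro s hs k c hcc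
    rcases Nat.eq_zero_or_pos k with rfl | hk
    · exact ⟨∅, Finset.empty_subset _, by simp⟩
    · obtain ⟨v, hv, _⟩ := hcc.2.1 0 hk
      have hse : s = ∅ := Finset.card_eq_zero.mp (Nat.le_zero.mp hs)
      simp [hse] at hv
  | succ n ih =>
    intro s hs k c hcc
    obtain ⟨hbd, hcol, hpair⟩ := hcc
    rcases Nat.lt_or_ge k 2 with hk | hk2
    · interval_cases k
      · exact ⟨∅, Finset.empty_subset _, by simp⟩
      · obtain ⟨v, hv, _⟩ := hcol 0 one_pos
        exact ⟨{v}, Finset.singleton_subset_iff.mpr hv, by simp⟩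
    -- main case : k ≥ 2
    obtain ⟨x0, hx0, y0, hy0, hxy0, _, _⟩ := hpair 0 1 (by omega) (by omega) (by omega)
    set N : V → Finset V := fun x => s.filter (fun z => z = x ∨ G.Adj x z) with hN
    have hmemN : ∀ x z, z ∈ N x ↔ z ∈ s ∧ (z = x ∨ G.Adj x z) := fun x z => Finset.mem_filter
    have hNsub : ∀ x, N x ⊆ s := fun x => Finset.filter_subset _ _
    have hself : ∀ x ∈ s, x ∈ N x := fun x hx => (hmemN x x).mpr ⟨hx, Or.inl rfl⟩
    have hcomp : ∀ x ∈ s, ∀ y ∈ s, G.Adj x y → N x ⊆ N y ∨ N y ⊆ N x := by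
      intro x hx y hy hxy
      by_contra hcon
      push_neg at hcon
      obtain ⟨p, hpx, hpy⟩ := Finset.not_subset.mp hcon.1
      obtain ⟨q, hqy, hqx⟩ := Finset.not_subset.mp hcon.2
      rw [hmemN] at hpx hqy
      have hps : p ∈ s := hpx.1
      have hqs : q ∈ s := hqy.1
      have hpy' : ¬(p = y ∨ G.Adj y p) := fun h => hpy ((hmemN y p).mpr ⟨hps, h⟩)
      have hqx' : ¬(q = x ∨ G.Adj x q) := fun h => hqx ((hmemN x q).mpr ⟨hqs, h⟩)
      push_neg at hpy' hqx'
      have hxp : G.Adj x p := by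
        rcases hpx.2 with rfl | h
        · exact absurd hxy.symm hpy'.2
        · exact h
      have hyq : G.Adj y q := by
        rcases hqy.2 with rfl | h
        · exact absurd hxy hqx'.2
        · exact h
      have hpq : p ≠ q := fun h => hqx'.2 (h ▸ hxp)
      by_cases hadj : G.Adj p q
      · exact h4 p x y q hpy'.1 hqx'.1.symm hxp.symm hxy hyq hadj.symm
          (fun h => hpy'.2 h.symm) hqx'.2
      · exact hp p x y q hpq hxp.symm hxy hyq (fun h => hpy'.2 h.symm) hqx'.2 hadj
    set S : Finset V := s.filter (fun x => ∃ y ∈ s, G.Adj x y) with hS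
    have hSne : S.Nonempty := ⟨x0, Finset.mem_filter.mpr ⟨hx0, y0, hy0, hxy0⟩⟩
    obtain ⟨u, huS, humax⟩ := S.exists_max_image (fun x => (N x).card) hSne
    have hus : u ∈ s := (Finset.mem_filter.mp huS).1
    obtain ⟨w, hws, huw⟩ := (Finset.mem_filter.mp huS).2
    have huN : u ∈ N u := hself u hus
    have hwN : w ∈ N u := (hmemN u w).mpr ⟨hws, Or.inr huw⟩
    have hclosed : ∀ a ∈ N u, ∀ b ∈ s, G.Adj a b → b ∈ N u := by
      intro a haN b hbs hab
      rcases (hmemN u a).mp haN with ⟨has, heq | hua⟩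
      · exact (hmemN u b).mpr ⟨hbs, Or.inr (by rw [← heq]; exact hab)⟩
      · have haS : a ∈ S := Finset.mem_filter.mpr ⟨has, b, hbs, hab⟩
        rcases hcomp u hus a has hua with h | h
        · have heq := Finset.eq_of_subset_of_card_le h (humax a haS)
          rw [heq]
          exact (hmemN a b).mpr ⟨hbs, Or.inr hab⟩
        · exact h ((hmemN a b).mpr ⟨hbs, Or.inr hab⟩)
    have hcross : ∀ a ∈ N u, ∀ b ∈ s, b ∉ N u → ¬ G.Adj a b :=
      fun a ha b hb hbn hab => hbn (hclosed a ha b hb hab)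
    have hcross' : ∀ b ∈ s, b ∉ N u → ∀ a ∈ N u, ¬ G.Adj b a :=
      fun b hb hbn a ha h => hcross a ha b hb hbn h.symm
    have hbuild : ∀ (T : Finset V), T ⊆ s → (∀ a ∈ T, ∀ b ∈ T, a ≠ b → G.Adj a b) →
        (∀ i, i < k → ∃ v ∈ T, c v = i) → ∃ t, t ⊆ s ∧ G.IsNClique k t := by
      intro T hTs hTcl hTcov
      set g : Fin k → V := fun i => (hTcov i i.2).choose with hg
      have hg1 : ∀ i : Fin k, g i ∈ T := fun i => (hTcov i i.2).choose_spec.1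
      have hg2 : ∀ i : Fin k, c (g i) = i := fun i => (hTcov i i.2).choose_spec.2
      have hginj : Function.Injective g := by
        intro i j hij
        exact Fin.ext (by rw [← hg2 i, ← hg2 j, hij])
      refine ⟨Finset.image g Finset.univ, ?_, ?_, ?_⟩
      · intro v hv
        obtain ⟨i, _, rfl⟩ := Finset.mem_image.mp hv
        exact hTs (hg1 i)
      · intro a ha b hb hne
        simp only [Finset.coe_image, Set.mem_image, Finset.mem_coe] at ha hb
        obtain ⟨i, _, rfl⟩ := ha
        obtain ⟨j, _, rfl⟩ := hb
        exact hTcl _ (hg1 i) _ (hg1 j) hne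
      · rw [Finset.card_image_of_injective _ hginj, Finset.card_univ, Fintype.card_fin]
    by_cases hRedge : ∃ x ∈ s, x ∉ N u ∧ ∃ y ∈ s, y ∉ N u ∧ G.Adj x y
    · -- Case 2
      obtain ⟨x, hxs, hxN, y, hys, hyN, hxy⟩ := hRedge
      have hNuclique : ∀ a ∈ N u, ∀ b ∈ N u, a ≠ b → G.Adj a b := by
        intro a ha b hb hab
        by_contra hnadj
        rcases (hmemN u a).mp ha with ⟨has, heqa | hua⟩
        · rcases (hmemN u b).mp hb with ⟨hbs, heqb | hub⟩
          · exact hab (heqa.trans heqb.symm)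
          · exact hnadj (by rw [heqa]; exact hub)
        · rcases (hmemN u b).mp hb with ⟨hbs, heqb | hub⟩
          · exact hnadj (by rw [heqb]; exact hua.symm)
          · exact hpk a u b x y hab hua.symm hub hnadj hxy
              (hcross a ha x hxs hxN) (hcross a ha y hys hyN)
              (hcross u huN x hxs hxN) (hcross u huN y hys hyN)
              (hcross b hb x hxs hxN) (hcross b hb y hys hyN)
      set D : Finset V := s.filter (fun z => z ∉ N u ∧ ∃ y' ∈ s, y' ∉ N u ∧ G.Adj z y') with hD
      have hDs : D ⊆ s := Finset.filter_subset _ _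
      have hDclique : ∀ z₁ ∈ D, ∀ z₂ ∈ D, z₁ ≠ z₂ → G.Adj z₁ z₂ := by
        intro z₁ hz₁ z₂ hz₂ hne
        by_contra hnadj
        obtain ⟨hz₁s, hz₁N, a₁, ha₁s, ha₁N, hza₁⟩ := Finset.mem_filter.mp hz₁
        obtain ⟨hz₂s, hz₂N, a₂, ha₂s, ha₂N, hza₂⟩ := Finset.mem_filter.mp hz₂
        have h1 : ¬ G.Adj a₁ z₂ := by
          intro h
          exact hpk z₁ a₁ z₂ u w hne hza₁ h hnadj huw
            (hcross' z₁ hz₁s hz₁N u huN) (hcross' z₁ hz₁s hz₁N w hwN)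
            (hcross' a₁ ha₁s ha₁N u huN) (hcross' a₁ ha₁s ha₁N w hwN)
            (hcross' z₂ hz₂s hz₂N u huN) (hcross' z₂ hz₂s hz₂N w hwN)
        have h2 : ¬ G.Adj z₁ a₂ := by
          intro h
          exact hpk z₁ a₂ z₂ u w hne h hza₂.symm hnadj huw
            (hcross' z₁ hz₁s hz₁N u huN) (hcross' z₁ hz₁s hz₁N w hwN)
            (hcross' a₂ ha₂s ha₂N u huN) (hcross' a₂ ha₂s ha₂N w hwN)
            (hcross' z₂ hz₂s hz₂N u huN) (hcross' z₂ hz₂s hz₂N w hwN)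
        have hz₁a₂ : z₁ ≠ a₂ := by
          rintro rfl
          exact hnadj hza₂.symm
        by_cases hadj : G.Adj a₁ a₂
        · exact hpk z₁ a₁ a₂ u w hz₁a₂ hza₁ hadj h2 huw
            (hcross' z₁ hz₁s hz₁N u huN) (hcross' z₁ hz₁s hz₁N w hwN)
            (hcross' a₁ ha₁s ha₁N u huN) (hcross' a₁ ha₁s ha₁N w hwN)
            (hcross' a₂ ha₂s ha₂N u huN) (hcross' a₂ ha₂s ha₂N w hwN)
        · exact h3 z₁ a₁ z₂ a₂ u w hza₁ hza₂ huw
            hnadj h2 h1 hadj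
            (hcross' z₁ hz₁s hz₁N u huN) (hcross' z₁ hz₁s hz₁N w hwN)
            (hcross' a₁ ha₁s ha₁N u huN) (hcross' a₁ ha₁s ha₁N w hwN)
            (hcross' z₂ hz₂s hz₂N u huN) (hcross' z₂ hz₂s hz₂N w hwN)
            (hcross' a₂ ha₂s ha₂N u huN) (hcross' a₂ ha₂s ha₂N w hwN)
      have hcover : ∀ i, i < k → (∃ v ∈ N u, c v = i) ∨ (∃ v ∈ D, c v = i) := by
        intro i hi
        set j := if i = 0 then 1 else 0 with hj
        have hji : j ≠ i := by simp [hj]; split_ifs <;> omega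
        have hjk : j < k := by simp [hj]; split_ifs <;> omega
        obtain ⟨x', hx's, y', hy's, hadj, hcx', hcy'⟩ := hpair i j hi hjk (Ne.symm hji)
        by_cases hx'N : x' ∈ N u
        · exact Or.inl ⟨x', hx'N, hcx'⟩
        · have hy'N : y' ∉ N u := fun h => hx'N (hclosed y' h x' hx's hadj.symm)
          exact Or.inr ⟨x', Finset.mem_filter.mpr ⟨hx's, hx'N, y', hy's, hy'N, hadj⟩, hcx'⟩
      by_cases hA : ∀ i, i < k → ∃ v ∈ N u, c v = i
      · exact hbuild (N u) (hNsub u) hNuclique hA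
      · push_neg at hA
        obtain ⟨i₀, hi₀, hi₀N⟩ := hA
        have hB : ∀ i, i < k → ∃ v ∈ D, c v = i := by
          intro i hi
          rcases eq_or_ne i i₀ with rfl | hne'
          · rcases hcover i hi with ⟨v, hv, hcv⟩ | h
            · exact absurd hcv (hi₀N v hv)
            · exact h
          · obtain ⟨x', hx's, y', hy's, hadj, hcx', hcy'⟩ := hpair i₀ i hi₀ hi (Ne.symm hne')
            have hx'N : x' ∉ N u := fun h => hi₀N x' h hcx'
            have hy'N : y' ∉ N u := fun h => hx'N (hclosed y' h x' hx's hadj.symm)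
            exact ⟨y', Finset.mem_filter.mpr ⟨hy's, hy'N, x', hx's, hx'N, hadj.symm⟩, hcy'⟩
        exact hbuild D hDs hDclique hB
    · -- Case 1
      push_neg at hRedge
      have hwitN : ∀ x' ∈ s, ∀ y' ∈ s, G.Adj x' y' → x' ∈ N u ∧ y' ∈ N u := by
        intro x hx y hy hxy
        by_cases hxN : x ∈ N u
        · exact ⟨hxN, hclosed x hxN y hy hxy⟩
        · by_cases hyN : y ∈ N u
          · exact ⟨hclosed y hyN x hx hxy.symm, hyN⟩
          · exact absurd hxy (hRedge x hx hxN y hy hyN)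
      set m := c u with hm
      have hmk : m < k := hbd u hus
      set c' : V → ℕ := fun v => if c v < m then c v else c v - 1 with hc'
      set s' := (N u).erase u with hs'
      have hs'card : s'.card ≤ n := by
        have h1 : s'.card < (N u).card := Finset.card_erase_lt_of_mem huN
        have h2 : (N u).card ≤ s.card := Finset.card_le_card (hNsub u)
        omega
      set J : ℕ → ℕ := fun i => if i < m then i else i + 1 with hJ
      have hget : ∀ jj, jj < k → jj ≠ m → ∃ v ∈ s', c v = jj := by
        intro jj hjj hjm
        set j2 := if jj = 0 then 1 else 0 with hj2
        have hj2k : j2 < k := by simp [hj2]; split_ifs <;> omega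
        have hj2ne : jj ≠ j2 := by simp [hj2]; split_ifs <;> omega
        obtain ⟨x', hx's, y', hy's, hadj, hcx', hcy'⟩ := hpair jj j2 hjj hj2k hj2ne
        have hx'N : x' ∈ N u := (hwitN x' hx's y' hy's hadj).1
        have hx'u : x' ≠ u := fun h => hjm (by rw [← hcx', h])
        exact ⟨x', Finset.mem_erase.mpr ⟨hx'u, hx'N⟩, hcx'⟩
      have hRel' : RelCC G s' c' (k - 1) := by
        refine ⟨?_, ?_, ?_⟩
        · intro v hv
          have hvs : v ∈ s := hNsub u (Finset.mem_of_mem_erase hv)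
          have := hbd v hvs
          simp only [hc']
          split_ifs <;> omega
        · intro i hi
          have hJk : J i < k := by simp only [hJ]; split_ifs <;> omega
          have hJm : J i ≠ m := by simp only [hJ]; split_ifs <;> omega
          obtain ⟨v, hv, hcv⟩ := hget (J i) hJk hJm
          refine ⟨v, hv, ?_⟩
          simp only [hc', hcv, hJ]
          split_ifs <;> omega
        · intro i j hi hj hij
          have hJik : J i < k := by simp only [hJ]; split_ifs <;> omega
          have hJim : J i ≠ m := by simp only [hJ]; split_ifs <;> omega
          have hJjk : J j < k := by simp only [hJ]; split_ifs <;> omega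
          have hJjm : J j ≠ m := by simp only [hJ]; split_ifs <;> omega
          have hJij : J i ≠ J j := by simp only [hJ]; split_ifs <;> omega
          obtain ⟨x', hx's, y', hy's, hadj, hcx', hcy'⟩ := hpair (J i) (J j) hJik hJjk hJij
          have hx'N := (hwitN x' hx's y' hy's hadj).1
          have hy'N := (hwitN x' hx's y' hy's hadj).2
          refine ⟨x', Finset.mem_erase.mpr ⟨fun h => hJim (by rw [← hcx', h]), hx'N⟩,
                  y', Finset.mem_erase.mpr ⟨fun h => hJjm (by rw [← hcy', h]), hy'N⟩, hadj, ?_, ?_⟩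
          · simp only [hc', hcx', hJ]; split_ifs <;> omega
          · simp only [hc', hcy', hJ]; split_ifs <;> omega
      obtain ⟨t, hts', ht⟩ := ih s' hs'card (k-1) c' hRel'
      have hut : u ∉ t := fun h => (Finset.mem_erase.mp (hts' h)).1 rfl
      have hadjU : ∀ x' ∈ t, G.Adj u x' := by
        intro x hx
        have hxN := Finset.mem_erase.mp (hts' hx)
        rcases ((hmemN u x).mp hxN.2).2 with h | h
        · exact absurd h hxN.1
        · exact h
      refine ⟨insert u t, ?_, ?_, ?_⟩
      · intro v hv
        rcases Finset.mem_insert.mp hv with rfl | hvt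
        · exact hus
        · exact hNsub u (Finset.mem_of_mem_erase (hts' hvt))
      · intro a ha b hb hne
        simp only [Finset.coe_insert, Set.mem_insert_iff, Finset.mem_coe] at ha hb
        rcases ha with rfl | ha
        · rcases hb with rfl | hb
          · exact absurd rfl hne
          · exact hadjU b hb
        · rcases hb with rfl | hb
          · exact (hadjU a ha).symm
          · exact ht.1 (Finset.mem_coe.mpr ha) (Finset.mem_coe.mpr hb) hne
      · rw [Finset.card_insert_of_notMem hut, ht.2]
        omega


section Numbers
variable {V : Type*} [Fintype V] (G : SimpleGraph V)

lemma psi_bddAbove : BddAbove {k | ∃ c, IsCompleteColoring G c k} := by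
  classical
  refine ⟨Fintype.card V, fun k hk => ?_⟩
  obtain ⟨c, hb, hcol, _⟩ := hk
  have h : ∀ i : Fin k, ∃ v, c v = (i : ℕ) := fun i => hcol i i.2
  choose f hf using h
  have hinj : Function.Injective f := fun i j hij => Fin.ext (by rw [← hf i, ← hf j, hij])
  simpa using Fintype.card_le_of_injective f hinj

lemma psi_nonempty : {k | ∃ c, IsCompleteColoring G c k}.Nonempty := by
  classical
  cases isEmpty_or_nonempty V with
  | inl h => exact ⟨0, fun _ => 0, fun v => h.elim v, fun i hi => absurd hi (Nat.not_lt_zero i),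
      fun i j hi _ _ => absurd hi (Nat.not_lt_zero i)⟩
  | inr h =>
    exact ⟨1, fun _ => 0, fun v => one_pos,
      fun i hi => ⟨Classical.arbitrary V, (Nat.lt_one_iff.mp hi).symm⟩,
      fun i j hi hj hij => absurd (by omega : i = j) hij⟩

lemma omega_nonempty : {n | ∃ s : Finset V, G.IsNClique n s}.Nonempty :=
  ⟨0, ∅, by simp⟩

lemma omega_bddAbove : BddAbove {n | ∃ s : Finset V, G.IsNClique n s} := by
  refine ⟨Fintype.card V, fun n hn => ?_⟩
  obtain ⟨s, hs⟩ := hn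
  rw [← hs.2]
  exact Finset.card_le_univ s

lemma omega_le_psi : cliqueNumber G ≤ pseudoachromaticNumber G := by
  classical
  refine csSup_le (omega_nonempty G) (fun n hn => ?_)
  obtain ⟨t, ht⟩ := hn
  rcases Nat.eq_zero_or_pos n with rfl | hn1
  · exact Nat.zero_le _
  refine le_csSup (psi_bddAbove G) ?_
  have hcards : t.card = n := ht.2
  set e := t.equivFinOfCardEq hcards with he
  refine ⟨fun v => if h : v ∈ t then (e ⟨v, h⟩ : ℕ) else 0, ?_, ?_, ?_⟩
  · intro v
    dsimp only
    split_ifs with h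
    · exact (e ⟨v, h⟩).2
    · exact hn1
  · intro i hi
    refine ⟨(e.symm ⟨i, hi⟩ : V), ?_⟩
    dsimp only
    rw [dif_pos (e.symm ⟨i, hi⟩).2]
    simp
  · intro i j hi hj hij
    set x := e.symm ⟨i, hi⟩ with hx
    set y := e.symm ⟨j, hj⟩ with hy
    have hxy : (x : V) ≠ (y : V) := by
      intro h
      apply hij
      have : x = y := Subtype.ext h
      have h2 := congrArg e this
      simp [hx, hy] at h2
      exact h2
    refine ⟨x, y, ht.1 x.2 y.2 hxy, ?_, ?_⟩
    · dsimp only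
      rw [dif_pos x.2]
      simp [hx]
    · dsimp only
      rw [dif_pos y.2]
      simp [hy]
end Numbers



lemma psi_le_omega {V : Type*} [Fintype V] (G : SimpleGraph V)
    (h4 : NoC4 G) (hp : NoP4 G) (hpk : NoP3K2 G) (h3 : No3K2 G) :
    pseudoachromaticNumber G ≤ cliqueNumber G := by
  classical
  obtain ⟨c, hc⟩ := Nat.sSup_mem (psi_nonempty G) (psi_bddAbove G)
  have hrel : RelCC G Finset.univ c (pseudoachromaticNumber G) :=
    ⟨fun v _ => hc.1 v,
     fun i hi => (hc.2.1 i hi).imp (fun v hv => ⟨Finset.mem_univ v, hv⟩),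
     fun i j hi hj hij => by
      obtain ⟨x, y, hxy, hx, hy⟩ := hc.2.2 i j hi hj hij
      exact ⟨x, Finset.mem_univ x, y, Finset.mem_univ y, hxy, hx, hy⟩⟩
  obtain ⟨t, _, ht⟩ := core_aux G h4 hp hpk h3 Finset.univ.card Finset.univ le_rfl
    (pseudoachromaticNumber G) c hrel
  exact le_csSup (omega_bddAbove G) ⟨t, ht⟩


instance : DecidableRel cycleC4.Adj := fun v w =>
  decidable_of_iff _ (SimpleGraph.fromRel_adj _ v w).symm


set_option maxHeartbeats 2000000 in
lemma noC4_of_free {V : Type*} {G : SimpleGraph V} (hfree : GraphFree G cycleC4) : NoC4 G := by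
  intro a b c d hac hbd hab hbc hcd hda hnac hnbd
  have h1 : a ≠ b := hab.ne
  have h2 : b ≠ c := hbc.ne
  have h3 : c ≠ d := hcd.ne
  have h4 : d ≠ a := hda.ne
  set s : Set V := {a, b, c, d} with hs
  have ha : a ∈ s := by simp [hs]
  have hb : b ∈ s := by simp [hs]
  have hc : c ∈ s := by simp [hs]
  have hd : d ∈ s := by simp [hs]
  set f : Fin 4 → ↥s := ![⟨a, ha⟩, ⟨b, hb⟩, ⟨c, hc⟩, ⟨d, hd⟩] with hf
  have hbij : Function.Bijective f := by
    constructor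
    · intro i j hij
      fin_cases i <;> fin_cases j <;> simp_all [hf, Subtype.ext_iff] <;> tauto
    · rintro ⟨v, hv⟩
      rcases hv with rfl | rfl | rfl | rfl
      · exact ⟨0, rfl⟩
      · exact ⟨1, rfl⟩
      · exact ⟨2, rfl⟩
      · exact ⟨3, rfl⟩
  refine (hfree s).false ⟨(Equiv.ofBijective f hbij).symm, @fun x y => ?_⟩
  obtain ⟨i, rfl⟩ := hbij.2 x
  obtain ⟨j, rfl⟩ := hbij.2 y
  rw [show (Equiv.ofBijective f hbij).symm (f i) = i from Equiv.symm_apply_apply _ i,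
      show (Equiv.ofBijective f hbij).symm (f j) = j from Equiv.symm_apply_apply _ j]
  fin_cases i <;> fin_cases j
  all_goals first
    | (refine iff_of_true (by decide) ?_
       first | exact hab | exact hab.symm | exact hbc | exact hbc.symm | exact hcd | exact hcd.symm | exact hda | exact hda.symm)
    | (refine iff_of_false (by decide) ?_
       first | exact hnac | exact (fun h => hnac h.symm) | exact hnbd | exact (fun h => hnbd h.symm) | exact (G.induce s).irrefl)

instance : DecidableRel pathP4.Adj := fun v w =>
  decidable_of_iff _ (SimpleGraph.fromRel_adj _ v w).symm
instance : DecidableRel graphP3K2.Adj := fun v w =>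
  decidable_of_iff _ (SimpleGraph.fromRel_adj _ v w).symm
instance : DecidableRel graph3K2.Adj := fun v w =>
  decidable_of_iff _ (SimpleGraph.fromRel_adj _ v w).symm

set_option maxHeartbeats 2000000 in
lemma noP4_of_free {V : Type*} {G : SimpleGraph V} (hfree : GraphFree G pathP4) : NoP4 G := by
  intro a b c d hnead hab hbc hcd hnac hnbd hnad
  have h1 : a ≠ b := hab.ne
  have h2 : b ≠ c := hbc.ne
  have h3 : c ≠ d := hcd.ne
  have h5 : a ≠ c := fun h => hnad (h ▸ hcd)
  have h6 : b ≠ d := fun h => hnad (h ▸ hab)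
  set s : Set V := {a, b, c, d} with hs
  have ha : a ∈ s := by simp [hs]
  have hb : b ∈ s := by simp [hs]
  have hc : c ∈ s := by simp [hs]
  have hd : d ∈ s := by simp [hs]
  set f : Fin 4 → ↥s := ![⟨a, ha⟩, ⟨b, hb⟩, ⟨c, hc⟩, ⟨d, hd⟩] with hf
  have hbij : Function.Bijective f := by
    constructor
    · intro i j hij
      fin_cases i <;> fin_cases j <;> simp_all [hf, Subtype.ext_iff] <;> tauto
    · rintro ⟨v, hv⟩
      rcases hv with rfl | rfl | rfl | rfl
      · exact ⟨0, rfl⟩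
      · exact ⟨1, rfl⟩
      · exact ⟨2, rfl⟩
      · exact ⟨3, rfl⟩
  refine (hfree s).false ⟨(Equiv.ofBijective f hbij).symm, @fun x y => ?_⟩
  obtain ⟨i, rfl⟩ := hbij.2 x
  obtain ⟨j, rfl⟩ := hbij.2 y
  rw [show (Equiv.ofBijective f hbij).symm (f i) = i from Equiv.symm_apply_apply _ i,
      show (Equiv.ofBijective f hbij).symm (f j) = j from Equiv.symm_apply_apply _ j]
  fin_cases i <;> fin_cases j
  all_goals first
    | (refine iff_of_true (by decide) ?_
       first | exact hab | exact hab.symm | exact hbc | exact hbc.symm | exact hcd | exact hcd.symm)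
    | (refine iff_of_false (by decide) ?_
       first | exact hnac | exact (fun h => hnac h.symm) | exact hnbd | exact (fun h => hnbd h.symm) | exact hnad | exact (fun h => hnad h.symm) | exact (G.induce s).irrefl)

set_option maxHeartbeats 2000000 in
lemma noP3K2_of_free {V : Type*} {G : SimpleGraph V} (hfree : GraphFree G graphP3K2) :
    NoP3K2 G := by
  intro a b c d e hnea hab hbc hnac hde hnad hnae hnbd hnbe hncd hnce
  have h1 : a ≠ b := hab.ne
  have h2 : b ≠ c := hbc.ne
  have h3 : d ≠ e := hde.ne
  have h4 : a ≠ d := fun h => hnae (h ▸ hde)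
  have h5 : a ≠ e := fun h => hnad (h ▸ hde.symm)
  have h6 : b ≠ d := fun h => hnbe (h ▸ hde)
  have h7 : b ≠ e := fun h => hnbd (h ▸ hde.symm)
  have h8 : c ≠ d := fun h => hnce (h ▸ hde)
  have h9 : c ≠ e := fun h => hncd (h ▸ hde.symm)
  set s : Set V := {a, b, c, d, e} with hs
  have ha : a ∈ s := by simp [hs]
  have hb : b ∈ s := by simp [hs]
  have hc : c ∈ s := by simp [hs]
  have hd : d ∈ s := by simp [hs]
  have he : e ∈ s := by simp [hs]
  set f : Fin 5 → ↥s := ![⟨a, ha⟩, ⟨b, hb⟩, ⟨c, hc⟩, ⟨d, hd⟩, ⟨e, he⟩] with hf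
  have hbij : Function.Bijective f := by
    constructor
    · intro i j hij
      fin_cases i <;> fin_cases j <;> simp_all [hf, Subtype.ext_iff] <;> tauto
    · rintro ⟨v, hv⟩
      rcases hv with rfl | rfl | rfl | rfl | rfl
      · exact ⟨0, rfl⟩
      · exact ⟨1, rfl⟩
      · exact ⟨2, rfl⟩
      · exact ⟨3, rfl⟩
      · exact ⟨4, rfl⟩
  refine (hfree s).false ⟨(Equiv.ofBijective f hbij).symm, @fun x y => ?_⟩
  obtain ⟨i, rfl⟩ := hbij.2 x
  obtain ⟨j, rfl⟩ := hbij.2 y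
  rw [show (Equiv.ofBijective f hbij).symm (f i) = i from Equiv.symm_apply_apply _ i,
      show (Equiv.ofBijective f hbij).symm (f j) = j from Equiv.symm_apply_apply _ j]
  fin_cases i <;> fin_cases j
  all_goals first
    | (refine iff_of_true (by decide) ?_
       first | exact hab | exact hab.symm | exact hbc | exact hbc.symm | exact hde | exact hde.symm)
    | (refine iff_of_false (by decide) ?_
       first | exact hnac | exact (fun h => hnac h.symm) | exact hnad | exact (fun h => hnad h.symm) | exact hnae | exact (fun h => hnae h.symm) | exact hnbd | exact (fun h => hnbd h.symm) | exact hnbe | exact (fun h => hnbe h.symm) | exact hncd | exact (fun h => hncd h.symm) | exact hnce | exact (fun h => hnce h.symm) | exact (G.induce s).irrefl)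

set_option maxHeartbeats 2000000 in
lemma no3K2_of_free {V : Type*} {G : SimpleGraph V} (hfree : GraphFree G graph3K2) :
    No3K2 G := by
  intro a b c d e f hab hcd hef n1 n2 n3 n4 n5 n6 n7 n8 n9 n10 n11 n12
  have h1 : a ≠ b := hab.ne
  have h2 : c ≠ d := hcd.ne
  have h3 : e ≠ f := hef.ne
  have h4 : a ≠ c := fun h => n2 (h ▸ hcd)
  have h5 : a ≠ d := fun h => n1 (h ▸ hcd.symm)
  have h6 : b ≠ c := fun h => n4 (h ▸ hcd)
  have h7 : b ≠ d := fun h => n3 (h ▸ hcd.symm)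
  have h8 : a ≠ e := fun h => n6 (h ▸ hef)
  have h9 : a ≠ f := fun h => n5 (h ▸ hef.symm)
  have h10 : b ≠ e := fun h => n8 (h ▸ hef)
  have h11 : b ≠ f := fun h => n7 (h ▸ hef.symm)
  have h12 : c ≠ e := fun h => n10 (h ▸ hef)
  have h13 : c ≠ f := fun h => n9 (h ▸ hef.symm)
  have h14 : d ≠ e := fun h => n12 (h ▸ hef)
  have h15 : d ≠ f := fun h => n11 (h ▸ hef.symm)
  set s : Set V := {a, b, c, d, e, f} with hs
  have ha : a ∈ s := by simp [hs]
  have hb : b ∈ s := by simp [hs]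
  have hc : c ∈ s := by simp [hs]
  have hd : d ∈ s := by simp [hs]
  have he : e ∈ s := by simp [hs]
  have hf' : f ∈ s := by simp [hs]
  set g : Fin 6 → ↥s := ![⟨a, ha⟩, ⟨b, hb⟩, ⟨c, hc⟩, ⟨d, hd⟩, ⟨e, he⟩, ⟨f, hf'⟩] with hg
  have hbij : Function.Bijective g := by
    constructor
    · intro i j hij
      fin_cases i <;> fin_cases j <;> simp_all [hg, Subtype.ext_iff] <;> tauto
    · rintro ⟨v, hv⟩
      rcases hv with rfl | rfl | rfl | rfl | rfl | rfl
      · exact ⟨0, rfl⟩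
      · exact ⟨1, rfl⟩
      · exact ⟨2, rfl⟩
      · exact ⟨3, rfl⟩
      · exact ⟨4, rfl⟩
      · exact ⟨5, rfl⟩
  refine (hfree s).false ⟨(Equiv.ofBijective g hbij).symm, @fun x y => ?_⟩
  obtain ⟨i, rfl⟩ := hbij.2 x
  obtain ⟨j, rfl⟩ := hbij.2 y
  rw [show (Equiv.ofBijective g hbij).symm (g i) = i from Equiv.symm_apply_apply _ i,
      show (Equiv.ofBijective g hbij).symm (g j) = j from Equiv.symm_apply_apply _ j]
  fin_cases i <;> fin_cases j
  all_goals first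
    | (refine iff_of_true (by decide) ?_
       first | exact hab | exact hab.symm | exact hcd | exact hcd.symm | exact hef | exact hef.symm)
    | (refine iff_of_false (by decide) ?_
       first | exact n1 | exact (fun h => n1 h.symm) | exact n2 | exact (fun h => n2 h.symm) | exact n3 | exact (fun h => n3 h.symm) | exact n4 | exact (fun h => n4 h.symm) | exact n5 | exact (fun h => n5 h.symm) | exact n6 | exact (fun h => n6 h.symm) | exact n7 | exact (fun h => n7 h.symm) | exact n8 | exact (fun h => n8 h.symm) | exact n9 | exact (fun h => n9 h.symm) | exact n10 | exact (fun h => n10 h.symm) | exact n11 | exact (fun h => n11 h.symm) | exact n12 | exact (fun h => n12 h.symm) | exact (G.induce s).irrefl)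



lemma forward_aux {V : Type*} [Fintype V] {G : SimpleGraph V} (hperf : OmegaPsiPerfect G)
    {m : ℕ} (H : SimpleGraph (Fin m))
    (hcc : ∃ cH, IsCompleteColoring H cH 3)
    (htri : ∀ x y z : Fin m, H.Adj x y → H.Adj x z → H.Adj y z → False) :
    GraphFree G H := by
  classical
  intro s
  by_contra hne
  rw [not_isEmpty_iff] at hne
  obtain ⟨e⟩ := hne
  haveI : Fintype ↥s := (Set.toFinite s).fintype
  obtain ⟨cH, hcH⟩ := hcc
  have h3 : 3 ≤ pseudoachromaticNumber (G.induce s) := by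
    refine le_csSup (psi_bddAbove _) ⟨fun v => cH (e v), fun v => hcH.1 (e v), ?_, ?_⟩
    · intro i hi
      obtain ⟨w, hw⟩ := hcH.2.1 i hi
      exact ⟨e.symm w, by simp [hw]⟩
    · intro i j hi hj hij
      obtain ⟨u, w, huw, hu, hw⟩ := hcH.2.2 i j hi hj hij
      exact ⟨e.symm u, e.symm w, (SimpleGraph.Iso.map_adj_iff e.symm).mpr huw,
        by simp [hu], by simp [hw]⟩
  have h2 : cliqueNumber (G.induce s) ≤ 2 := by
    refine csSup_le (omega_nonempty _) (fun n hn => ?_)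
    by_contra hgt
    push_neg at hgt
    obtain ⟨t, ht⟩ := hn
    have h3le : 3 ≤ t.card := by rw [ht.2]; omega
    obtain ⟨t', ht's, ht'c⟩ := Finset.exists_subset_card_eq h3le
    obtain ⟨x, y, z, hxy, hxz, hyz, rfl⟩ := Finset.card_eq_three.mp ht'c
    have hcl : (G.induce s).IsClique (↑({x, y, z} : Finset ↥s)) :=
      ht.1.subset (Finset.coe_subset.mpr ht's)
    have m1 : x ∈ (↑({x, y, z} : Finset ↥s) : Set ↥s) := by simp
    have m2 : y ∈ (↑({x, y, z} : Finset ↥s) : Set ↥s) := by simp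
    have m3 : z ∈ (↑({x, y, z} : Finset ↥s) : Set ↥s) := by simp
    exact htri (e x) (e y) (e z)
      ((SimpleGraph.Iso.map_adj_iff e).mpr (hcl m1 m2 hxy))
      ((SimpleGraph.Iso.map_adj_iff e).mpr (hcl m1 m3 hxz))
      ((SimpleGraph.Iso.map_adj_iff e).mpr (hcl m2 m3 hyz))
  have := hperf s
  omega

lemma cc_C4 : IsCompleteColoring cycleC4 (![0, 1, 2, 0] : Fin 4 → ℕ) 3 := by
  refine ⟨by decide, ?_, ?_⟩
  · intro i hi
    interval_cases i
    · exact ⟨0, by decide⟩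
    · exact ⟨1, by decide⟩
    · exact ⟨2, by decide⟩
  · intro i j hi hj hij
    interval_cases i <;> interval_cases j <;>
      first
        | exact absurd rfl hij
        | exact ⟨0, 1, by decide, by decide, by decide⟩
        | exact ⟨1, 0, by decide, by decide, by decide⟩
        | exact ⟨1, 2, by decide, by decide, by decide⟩
        | exact ⟨2, 1, by decide, by decide, by decide⟩
        | exact ⟨3, 2, by decide, by decide, by decide⟩
        | exact ⟨2, 3, by decide, by decide, by decide⟩

lemma tri_C4 : ∀ x y z : Fin 4, cycleC4.Adj x y → cycleC4.Adj x z → cycleC4.Adj y z → False := by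
  decide

lemma cc_P4 : IsCompleteColoring pathP4 (![0, 1, 2, 0] : Fin 4 → ℕ) 3 := by
  refine ⟨by decide, ?_, ?_⟩
  · intro i hi
    interval_cases i
    · exact ⟨0, by decide⟩
    · exact ⟨1, by decide⟩
    · exact ⟨2, by decide⟩
  · intro i j hi hj hij
    interval_cases i <;> interval_cases j <;>
      first
        | exact absurd rfl hij
        | exact ⟨0, 1, by decide, by decide, by decide⟩
        | exact ⟨1, 0, by decide, by decide, by decide⟩
        | exact ⟨1, 2, by decide, by decide, by decide⟩
        | exact ⟨2, 1, by decide, by decide, by decide⟩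
        | exact ⟨3, 2, by decide, by decide, by decide⟩
        | exact ⟨2, 3, by decide, by decide, by decide⟩

lemma tri_P4 : ∀ x y z : Fin 4, pathP4.Adj x y → pathP4.Adj x z → pathP4.Adj y z → False := by
  decide

lemma cc_P3K2 : IsCompleteColoring graphP3K2 (![1, 0, 2, 1, 2] : Fin 5 → ℕ) 3 := by
  refine ⟨by decide, ?_, ?_⟩
  · intro i hi
    interval_cases i
    · exact ⟨1, by decide⟩
    · exact ⟨0, by decide⟩
    · exact ⟨2, by decide⟩
  · intro i j hi hj hij
    interval_cases i <;> interval_cases j <;>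
      first
        | exact absurd rfl hij
        | exact ⟨1, 0, by decide, by decide, by decide⟩
        | exact ⟨0, 1, by decide, by decide, by decide⟩
        | exact ⟨1, 2, by decide, by decide, by decide⟩
        | exact ⟨2, 1, by decide, by decide, by decide⟩
        | exact ⟨3, 4, by decide, by decide, by decide⟩
        | exact ⟨4, 3, by decide, by decide, by decide⟩

lemma tri_P3K2 : ∀ x y z : Fin 5, graphP3K2.Adj x y → graphP3K2.Adj x z →
    graphP3K2.Adj y z → False := by
  decide

lemma cc_3K2 : IsCompleteColoring graph3K2 (![0, 1, 0, 2, 1, 2] : Fin 6 → ℕ) 3 := by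
  refine ⟨by decide, ?_, ?_⟩
  · intro i hi
    interval_cases i
    · exact ⟨0, by decide⟩
    · exact ⟨1, by decide⟩
    · exact ⟨3, by decide⟩
  · intro i j hi hj hij
    interval_cases i <;> interval_cases j <;>
      first
        | exact absurd rfl hij
        | exact ⟨0, 1, by decide, by decide, by decide⟩
        | exact ⟨1, 0, by decide, by decide, by decide⟩
        | exact ⟨2, 3, by decide, by decide, by decide⟩
        | exact ⟨3, 2, by decide, by decide, by decide⟩
        | exact ⟨4, 5, by decide, by decide, by decide⟩
        | exact ⟨5, 4, by decide, by decide, by decide⟩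

lemma tri_3K2 : ∀ x y z : Fin 6, graph3K2.Adj x y → graph3K2.Adj x z →
    graph3K2.Adj y z → False := by
  decide


theorem stmt_17 {V : Type*} [Fintype V] (G : SimpleGraph V) :
    OmegaPsiPerfect G ↔
      (GraphFree G cycleC4 ∧ GraphFree G pathP4 ∧ GraphFree G graphP3K2 ∧
        GraphFree G graph3K2) := by
  constructor
  · intro hperf
    exact ⟨forward_aux hperf cycleC4 ⟨_, cc_C4⟩ tri_C4,
      forward_aux hperf pathP4 ⟨_, cc_P4⟩ tri_P4,
      forward_aux hperf graphP3K2 ⟨_, cc_P3K2⟩ tri_P3K2,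
      forward_aux hperf graph3K2 ⟨_, cc_3K2⟩ tri_3K2⟩
  · rintro ⟨hc4, hp4, hpk, h3k⟩
    have n4 := noC4_of_free hc4
    have np := noP4_of_free hp4
    have npk := noP3K2_of_free hpk
    have n3 := no3K2_of_free h3k
    intro s
    haveI : Fintype ↥s := (Set.toFinite s).fintype
    exact le_antisymm (omega_le_psi _)
      (psi_le_omega _ (n4.induce s) (np.induce s) (npk.induce s) (n3.induce s))
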